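/- (Theorem 3.1(ii)) Assume there exists a Hermitian X_P with R_{X_P} positive definite and X_P ≤ R(X_P), and there exists a Hermitian matrix in dom(R) with ρ(T̂) < 1. Let X_0 ∈ S_≥ and X_{k+1} := R(X_k). Then for all k ≥ 0 and every Hermitian X_P with R_{X_P} positive definite and X_P ≤ R(X_P), one has X_k ≥ X_{k+1} ≥ X_P (Loewner order); i.e., the sequence is nonincreasing and bounded below by every element of R_≤ ∩ ℙ. -/

import Mathlib

open Matrix Filter Topology
open scoped ComplexOrder

noncomputable section

namespace CDARE

variable {n m : ℕ}

/-- Entrywise complex conjugate of a matrix. -/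
def mconj {p q : ℕ} (M : Matrix (Fin p) (Fin q) ℂ) : Matrix (Fin p) (Fin q) ℂ :=
  M.map (starRingEnd ℂ)

/-- `hatM M = conj M * M`. -/
def hatM (M : Matrix (Fin n) (Fin n) ℂ) : Matrix (Fin n) (Fin n) ℂ := mconj M * M

/-- `R_X = R + Bᴴ X̄ B`. -/
def RX (R : Matrix (Fin m) (Fin m) ℂ) (B : Matrix (Fin n) (Fin m) ℂ)
    (X : Matrix (Fin n) (Fin n) ℂ) : Matrix (Fin m) (Fin m) ℂ :=
  R + Bᴴ * mconj X * B

/-- `F_X = R_X⁻¹ Bᴴ X̄ A`. -/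
def FX (A : Matrix (Fin n) (Fin n) ℂ) (B : Matrix (Fin n) (Fin m) ℂ)
    (R : Matrix (Fin m) (Fin m) ℂ) (X : Matrix (Fin n) (Fin n) ℂ) :
    Matrix (Fin m) (Fin n) ℂ :=
  (RX R B X)⁻¹ * (Bᴴ * mconj X * A)

/-- `T_X = A - B F_X`. -/
def TX (A : Matrix (Fin n) (Fin n) ℂ) (B : Matrix (Fin n) (Fin m) ℂ)
    (R : Matrix (Fin m) (Fin m) ℂ) (X : Matrix (Fin n) (Fin n) ℂ) :
    Matrix (Fin n) (Fin n) ℂ :=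
  A - B * FX A B R X

/-- The Riccati operator `R(X)`. -/
def Rop (A : Matrix (Fin n) (Fin n) ℂ) (B : Matrix (Fin n) (Fin m) ℂ)
    (R : Matrix (Fin m) (Fin m) ℂ) (H : Matrix (Fin n) (Fin n) ℂ)
    (X : Matrix (Fin n) (Fin n) ℂ) : Matrix (Fin n) (Fin n) ℂ :=
  Aᴴ * mconj X * A - Aᴴ * mconj X * B * (RX R B X)⁻¹ * (Bᴴ * mconj X * A) + H

/-- `H_X = H + F_Xᴴ R F_X`. -/
def HX (A : Matrix (Fin n) (Fin n) ℂ) (B : Matrix (Fin n) (Fin m) ℂ)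
    (R : Matrix (Fin m) (Fin m) ℂ) (H : Matrix (Fin n) (Fin n) ℂ)
    (X : Matrix (Fin n) (Fin n) ℂ) : Matrix (Fin n) (Fin n) ℂ :=
  H + (FX A B R X)ᴴ * R * FX A B R X

/-- `K(Y, X) = (F_Y - F_X)ᴴ R_X (F_Y - F_X)`. -/
def Kop (A : Matrix (Fin n) (Fin n) ℂ) (B : Matrix (Fin n) (Fin m) ℂ)
    (R : Matrix (Fin m) (Fin m) ℂ) (Y X : Matrix (Fin n) (Fin n) ℂ) :
    Matrix (Fin n) (Fin n) ℂ :=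
  (FX A B R Y - FX A B R X)ᴴ * RX R B X * (FX A B R Y - FX A B R X)

/-- Conjugate Stein operator `C_C(X) = X - Cᴴ X̄ C`. -/
def CStein (C X : Matrix (Fin n) (Fin n) ℂ) : Matrix (Fin n) (Fin n) ℂ :=
  X - Cᴴ * mconj X * C

/-- The set `S_≥`. -/
def Sge (A : Matrix (Fin n) (Fin n) ℂ) (B : Matrix (Fin n) (Fin m) ℂ)
    (R : Matrix (Fin m) (Fin m) ℂ) (H : Matrix (Fin n) (Fin n) ℂ) :
    Set (Matrix (Fin n) (Fin n) ℂ) :=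
  {X | X.IsHermitian ∧ ∃ XT : Matrix (Fin n) (Fin n) ℂ, XT.IsHermitian ∧
      IsUnit (RX R B XT) ∧ spectralRadius ℂ (hatM (TX A B R XT)) < 1 ∧
      (CStein (TX A B R XT) X - HX A B R H XT).PosSemidef}


/-! ### Auxiliary lemmas -/

attribute [local instance] Matrix.linftyOpNormedRing Matrix.linftyOpNormedAlgebra

open scoped ENNReal NNReal

lemma mconj_sub {p q : ℕ} (M N : Matrix (Fin p) (Fin q) ℂ) :
    mconj (M - N) = mconj M - mconj N := by
  ext i j; simp [mconj]

lemma mconj_mconj {p q : ℕ} (M : Matrix (Fin p) (Fin q) ℂ) : mconj (mconj M) = M := by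
  ext i j; simp [mconj]

lemma mconj_mul {p q r : ℕ} (M : Matrix (Fin p) (Fin q) ℂ) (N : Matrix (Fin q) (Fin r) ℂ) :
    mconj (M * N) = mconj M * mconj N := by
  ext i j; simp [mconj, Matrix.mul_apply, map_sum]

lemma mconj_conjTranspose {p q : ℕ} (M : Matrix (Fin p) (Fin q) ℂ) : mconj (Mᴴ) = Mᵀ := by
  ext i j; simp [mconj]

lemma mconj_eq {p q : ℕ} (M : Matrix (Fin p) (Fin q) ℂ) : mconj M = (Mᴴ)ᵀ := by
  ext i j; simp [mconj]

lemma conjTranspose_mconj {p q : ℕ} (M : Matrix (Fin p) (Fin q) ℂ) : (mconj M)ᴴ = Mᵀ := by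
  ext i j; simp [mconj]

lemma mconj_of_isHermitian {X : Matrix (Fin n) (Fin n) ℂ} (h : X.IsHermitian) :
    mconj X = Xᵀ := by rw [mconj_eq, h.eq]

lemma posSemidef_mconj {X : Matrix (Fin n) (Fin n) ℂ} (h : X.PosSemidef) :
    (mconj X).PosSemidef := by
  rw [mconj_of_isHermitian h.1]; exact h.transpose

variable (A : Matrix (Fin n) (Fin n) ℂ) (B : Matrix (Fin n) (Fin m) ℂ)
  (R : Matrix (Fin m) (Fin m) ℂ) (H : Matrix (Fin n) (Fin n) ℂ)

lemma isHermitian_RX (hR : R.IsHermitian) {X : Matrix (Fin n) (Fin n) ℂ}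
    (hX : X.IsHermitian) : (RX R B X).IsHermitian := by
  rw [RX]
  refine hR.add ?_
  rw [Matrix.IsHermitian, Matrix.conjTranspose_mul, Matrix.conjTranspose_mul,
    Matrix.conjTranspose_conjTranspose, conjTranspose_mconj, mconj_of_isHermitian hX,
    Matrix.mul_assoc]

lemma RX_mul_FX {X : Matrix (Fin n) (Fin n) ℂ} (hu : IsUnit (RX R B X)) :
    RX R B X * FX A B R X = Bᴴ * mconj X * A := by
  rw [FX, ← Matrix.mul_assoc,
    Matrix.mul_nonsing_inv _ ((Matrix.isUnit_iff_isUnit_det _).1 hu), Matrix.one_mul]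

lemma FXH_mul_RX (hR : R.IsHermitian) {X : Matrix (Fin n) (Fin n) ℂ} (hX : X.IsHermitian)
    (hu : IsUnit (RX R B X)) :
    (FX A B R X)ᴴ * RX R B X = Aᴴ * mconj X * B := by
  have h := congrArg Matrix.conjTranspose (RX_mul_FX A B R hu)
  rw [Matrix.conjTranspose_mul, (isHermitian_RX B R hR hX).eq] at h
  rw [h, Matrix.conjTranspose_mul, Matrix.conjTranspose_mul, Matrix.conjTranspose_conjTranspose,
    conjTranspose_mconj, mconj_of_isHermitian hX, Matrix.mul_assoc]

/-- The key identity: for Hermitian `X` with `R_X` invertible and any `Y`,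
`R(X) = T_Yᴴ X̄ T_Y + H_Y - K(Y,X)`. -/
lemma key_identity (hR : R.IsHermitian) {X : Matrix (Fin n) (Fin n) ℂ} (Y : Matrix (Fin n) (Fin n) ℂ)
    (hX : X.IsHermitian) (hu : IsUnit (RX R B X)) :
    Rop A B R H X =
      (TX A B R Y)ᴴ * mconj X * TX A B R Y + HX A B R H Y - Kop A B R Y X := by
  set S := RX R B X with hSdef
  set G := FX A B R X with hGdef
  set F := FX A B R Y with hFdef
  have hSS : S * S⁻¹ = 1 := Matrix.mul_nonsing_inv _ ((Matrix.isUnit_iff_isUnit_det _).1 hu)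
  have h1 : Bᴴ * (mconj X * A) = S * G := by
    rw [← Matrix.mul_assoc]; exact (RX_mul_FX A B R hu).symm
  have h2 : ∀ Z : Matrix (Fin m) (Fin n) ℂ, Aᴴ * (mconj X * (B * Z)) = Gᴴ * (S * Z) := by
    intro Z
    rw [← Matrix.mul_assoc, ← Matrix.mul_assoc, ← FXH_mul_RX A B R hR hX hu,
      Matrix.mul_assoc]
  have h3 : ∀ Z : Matrix (Fin m) (Fin n) ℂ,
      Bᴴ * (mconj X * (B * Z)) = S * Z - R * Z := by
    intro Z
    rw [← Matrix.sub_mul, hSdef, RX, add_sub_cancel_left, Matrix.mul_assoc, Matrix.mul_assoc]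
  simp only [Rop, TX, HX, Kop, ← hSdef, ← hGdef, ← hFdef, Matrix.sub_mul, Matrix.mul_sub,
    Matrix.conjTranspose_sub, Matrix.conjTranspose_mul, Matrix.mul_assoc]
  rw [h1, h2, h2, h3]
  rw [show S * (S⁻¹ * (S * G)) = S * G by rw [← Matrix.mul_assoc, hSS, Matrix.one_mul]]
  simp only [Matrix.mul_sub]
  abel

lemma Kop_self {X : Matrix (Fin n) (Fin n) ℂ} : Kop A B R X X = 0 := by
  simp [Kop]

lemma Rop_eq_TX (hR : R.IsHermitian) {X : Matrix (Fin n) (Fin n) ℂ}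
    (hX : X.IsHermitian) (hu : IsUnit (RX R B X)) :
    Rop A B R H X = (TX A B R X)ᴴ * mconj X * TX A B R X + HX A B R H X := by
  rw [key_identity A B R H hR X hX hu, Kop_self, sub_zero]

lemma isHermitian_HX (hR : R.IsHermitian) (hH : H.IsHermitian)
    (Y : Matrix (Fin n) (Fin n) ℂ) : (HX A B R H Y).IsHermitian := by
  refine hH.add ?_
  rw [Matrix.IsHermitian, Matrix.conjTranspose_mul, Matrix.conjTranspose_mul,
    Matrix.conjTranspose_conjTranspose, hR.eq, Matrix.mul_assoc]

lemma isHermitian_sandwich {X : Matrix (Fin n) (Fin n) ℂ} (hX : X.IsHermitian)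
    (C : Matrix (Fin n) (Fin n) ℂ) : (Cᴴ * mconj X * C).IsHermitian := by
  rw [Matrix.IsHermitian, Matrix.conjTranspose_mul, Matrix.conjTranspose_mul,
    Matrix.conjTranspose_conjTranspose, conjTranspose_mconj, mconj_of_isHermitian hX,
    Matrix.mul_assoc]

lemma isHermitian_Rop (hR : R.IsHermitian) (hH : H.IsHermitian)
    {X : Matrix (Fin n) (Fin n) ℂ} (hX : X.IsHermitian) (hu : IsUnit (RX R B X)) :
    (Rop A B R H X).IsHermitian := by
  rw [Rop_eq_TX A B R H hR hX hu]
  exact (isHermitian_sandwich hX _).add (isHermitian_HX A B R H hR hH X)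

lemma posSemidef_sandwich {p q : ℕ} {W : Matrix (Fin p) (Fin p) ℂ} (hW : W.PosSemidef)
    (C : Matrix (Fin p) (Fin q) ℂ) : (Cᴴ * W * C).PosSemidef :=
  hW.conjTranspose_mul_mul_same C

lemma posSemidef_Kop {Y X : Matrix (Fin n) (Fin n) ℂ} (hpsd : (RX R B X).PosSemidef) :
    (Kop A B R Y X).PosSemidef :=
  hpsd.conjTranspose_mul_mul_same _

lemma RX_sub_RX (Y Z : Matrix (Fin n) (Fin n) ℂ) :
    RX R B Y = RX R B Z + Bᴴ * mconj (Y - Z) * B := by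
  rw [mconj_sub]
  simp only [RX, Matrix.mul_sub, Matrix.sub_mul]
  abel

lemma posDef_RX_of_ge {Y Z : Matrix (Fin n) (Fin n) ℂ} (hpd : (RX R B Z).PosDef)
    (hge : (Y - Z).PosSemidef) : (RX R B Y).PosDef := by
  rw [RX_sub_RX B R Y Z]
  exact hpd.add_posSemidef (posSemidef_sandwich (posSemidef_mconj hge) B)

/-- Monotonicity engine: if `X ≥ Z` then `R(X) ≥ R(Z)`. -/
lemma posSemidef_Rop_sub_Rop (hR : R.IsHermitian) {X Z : Matrix (Fin n) (Fin n) ℂ}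
    (hX : X.IsHermitian) (hZ : Z.IsHermitian) (huX : IsUnit (RX R B X))
    (huZ : IsUnit (RX R B Z)) (hpsdZ : (RX R B Z).PosSemidef)
    (hge : (X - Z).PosSemidef) :
    (Rop A B R H X - Rop A B R H Z).PosSemidef := by
  have hx := Rop_eq_TX A B R H hR hX huX
  have hz := key_identity A B R H hR X hZ huZ
  have : Rop A B R H X - Rop A B R H Z =
      (TX A B R X)ᴴ * mconj (X - Z) * TX A B R X + Kop A B R X Z := by
    rw [hx, hz, mconj_sub]
    simp only [Matrix.mul_sub, Matrix.sub_mul]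
    abel
  rw [this]
  exact ((posSemidef_mconj hge).conjTranspose_mul_mul_same _).add
    (posSemidef_Kop A B R hpsdZ)

/-! ### The conjugate Stein inequality -/

lemma pow_norm_tendsto_zero {M : Matrix (Fin n) (Fin n) ℂ}
    (h : spectralRadius ℂ M < 1) : Tendsto (fun k : ℕ => ‖M ^ k‖) atTop (𝓝 0) := by
  obtain ⟨r, hr1, hr2⟩ := ENNReal.lt_iff_exists_nnreal_btwn.1 h
  have hge := spectrum.pow_nnnorm_pow_one_div_tendsto_nhds_spectralRadius M
  have hev : ∀ᶠ k : ℕ in atTop, (‖M ^ k‖₊ : ℝ≥0∞) ^ (1 / (k : ℝ)) < (r : ℝ≥0∞) :=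
    hge.eventually_lt_const hr1
  have hr2' : (r : ℝ) < 1 := by exact_mod_cast hr2
  refine squeeze_zero' (Filter.Eventually.of_forall fun k => norm_nonneg _) ?_
    (tendsto_pow_atTop_nhds_zero_of_lt_one r.coe_nonneg hr2')
  filter_upwards [hev, Filter.eventually_ge_atTop 1] with k hk hk1
  have hknz : (k : ℝ) ≠ 0 := by positivity
  have h1 : (‖M ^ k‖₊ : ℝ≥0∞) = ((‖M ^ k‖₊ : ℝ≥0∞) ^ (1 / (k : ℝ))) ^ (k : ℝ) := by
    rw [← ENNReal.rpow_mul, one_div_mul_cancel hknz, ENNReal.rpow_one]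
  have h2 : (‖M ^ k‖₊ : ℝ≥0∞) ≤ (r : ℝ≥0∞) ^ (k : ℕ) := by
    rw [h1, ← ENNReal.rpow_natCast (r : ℝ≥0∞) k]
    exact ENNReal.rpow_le_rpow hk.le (by positivity)
  rw [← ENNReal.coe_pow, ENNReal.coe_le_coe] at h2
  calc ‖M ^ k‖ = ((‖M ^ k‖₊ : ℝ≥0) : ℝ) := rfl
    _ ≤ ((r ^ k : ℝ≥0) : ℝ) := by exact_mod_cast h2
    _ = (r : ℝ) ^ k := by push_cast; ring

lemma quad_sandwich (N W : Matrix (Fin n) (Fin n) ℂ) (v : Fin n → ℂ) :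
    star v ⬝ᵥ (Nᴴ * W * N) *ᵥ v = star (N *ᵥ v) ⬝ᵥ W *ᵥ (N *ᵥ v) := by
  rw [← Matrix.mulVec_mulVec, ← Matrix.mulVec_mulVec, Matrix.dotProduct_mulVec,
    Matrix.star_mulVec]

lemma herm_form_star {W : Matrix (Fin n) (Fin n) ℂ} (hW : W.IsHermitian) (v : Fin n → ℂ) :
    star (star v ⬝ᵥ W *ᵥ v) = star v ⬝ᵥ W *ᵥ v := by
  calc star (star v ⬝ᵥ W *ᵥ v) = star (W *ᵥ v) ⬝ᵥ star (star v) :=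
        (Matrix.star_dotProduct_star _ _).symm
    _ = star (W *ᵥ v) ⬝ᵥ v := by rw [star_star]
    _ = (star v ᵥ* Wᴴ) ⬝ᵥ v := by rw [Matrix.star_mulVec]
    _ = star v ⬝ᵥ (Wᴴ *ᵥ v) := (Matrix.dotProduct_mulVec _ _ _).symm
    _ = star v ⬝ᵥ W *ᵥ v := by rw [hW.eq]

lemma norm_dotProduct_le (x y : Fin n → ℂ) : ‖x ⬝ᵥ y‖ ≤ (n : ℝ) * (‖x‖ * ‖y‖) := by
  calc ‖x ⬝ᵥ y‖ ≤ ∑ i, ‖x i * y i‖ := norm_sum_le _ _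
    _ = ∑ i, ‖x i‖ * ‖y i‖ := by simp [norm_mul]
    _ ≤ ∑ _i : Fin n, ‖x‖ * ‖y‖ := Finset.sum_le_sum fun i _ =>
        mul_le_mul (norm_le_pi_norm x i) (norm_le_pi_norm y i) (norm_nonneg _) (norm_nonneg _)
    _ = (n : ℝ) * (‖x‖ * ‖y‖) := by simp [Finset.sum_const, Finset.card_univ, nsmul_eq_mul]

/-- The conjugate Stein map. -/
def sPhi (T Z : Matrix (Fin n) (Fin n) ℂ) : Matrix (Fin n) (Fin n) ℂ := Tᴴ * mconj Z * T

lemma sPhi_psd {T Z : Matrix (Fin n) (Fin n) ℂ} (hZ : Z.PosSemidef) : (sPhi T Z).PosSemidef :=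
  (posSemidef_mconj hZ).conjTranspose_mul_mul_same T

lemma sPhi_herm {T Z : Matrix (Fin n) (Fin n) ℂ} (hZ : Z.IsHermitian) :
    (sPhi T Z).IsHermitian := isHermitian_sandwich hZ T

lemma sPhi_sub (T Y Z : Matrix (Fin n) (Fin n) ℂ) :
    sPhi T (Y - Z) = sPhi T Y - sPhi T Z := by
  simp only [sPhi, mconj_sub, Matrix.mul_sub, Matrix.sub_mul]

lemma sPhi_sPhi (T Z : Matrix (Fin n) (Fin n) ℂ) :
    sPhi T (sPhi T Z) = (hatM T)ᴴ * Z * hatM T := by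
  simp only [sPhi, hatM, mconj_mul, mconj_conjTranspose, mconj_mconj,
    Matrix.conjTranspose_mul, conjTranspose_mconj, Matrix.mul_assoc]

lemma sPhi_chain {T W : Matrix (Fin n) (Fin n) ℂ} (hW : W.IsHermitian)
    (h : (CStein T W).PosSemidef) :
    ∀ k : ℕ, (W - (sPhi T)^[k] W).PosSemidef ∧ ((sPhi T)^[k] W).IsHermitian := by
  intro k
  induction k with
  | zero => simpa using ⟨by simpa using (Matrix.PosSemidef.zero (n := Fin n)), hW⟩
  | succ k ih =>
    refine ⟨?_, by rw [Function.iterate_succ_apply']; exact sPhi_herm ih.2⟩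
    have hstep : W - (sPhi T)^[k+1] W =
        (W - sPhi T W) + sPhi T (W - (sPhi T)^[k] W) := by
      rw [sPhi_sub, Function.iterate_succ_apply']; abel
    rw [hstep]
    have hCS : (W - sPhi T W).PosSemidef := by simpa [CStein, sPhi] using h
    exact hCS.add (sPhi_psd ih.1)

lemma sPhi_pow (T W : Matrix (Fin n) (Fin n) ℂ) :
    ∀ k : ℕ, (sPhi T)^[2 * k] W = ((hatM T) ^ k)ᴴ * W * (hatM T) ^ k := by
  intro k
  induction k with
  | zero => simp
  | succ k ih =>
    have h2 : 2 * (k + 1) = (2 * k + 1) + 1 := by ring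
    rw [h2, Function.iterate_succ_apply', Function.iterate_succ_apply', ih, sPhi_sPhi,
      pow_succ, Matrix.conjTranspose_mul]
    simp only [Matrix.mul_assoc]

/-- Conjugate Stein inequality: if `ρ(T̄T) < 1` and `W - Tᴴ W̄ T ⪰ 0` then `W ⪰ 0`. -/
lemma posSemidef_of_CStein (T W : Matrix (Fin n) (Fin n) ℂ)
    (hρ : spectralRadius ℂ (hatM T) < 1) (hW : W.IsHermitian)
    (h : (CStein T W).PosSemidef) : W.PosSemidef := by
  have hpow := pow_norm_tendsto_zero hρ
  refine Matrix.PosSemidef.of_dotProduct_mulVec_nonneg hW fun v => ?_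
  set M := hatM T with hM
  set c : ℕ → ℂ := fun k => star ((M ^ k) *ᵥ v) ⬝ᵥ W *ᵥ ((M ^ k) *ᵥ v) with hc
  have him : (star v ⬝ᵥ W *ᵥ v).im = 0 := by
    have := herm_form_star hW v
    rw [Complex.star_def, Complex.conj_eq_iff_im] at this
    exact this
  have hkey : ∀ k : ℕ, (c k).re ≤ (star v ⬝ᵥ W *ᵥ v).re := by
    intro k
    have hpsd := (sPhi_chain hW h (2 * k)).1
    rw [sPhi_pow, ← hM] at hpsd
    have h0 := hpsd.dotProduct_mulVec_nonneg v
    rw [Matrix.sub_mulVec, dotProduct_sub, quad_sandwich] at h0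
    have h1 := (Complex.le_def.1 h0).1
    simp only [Complex.zero_re, Complex.sub_re] at h1
    show (star ((M ^ k) *ᵥ v) ⬝ᵥ W *ᵥ ((M ^ k) *ᵥ v)).re ≤ (star v ⬝ᵥ W *ᵥ v).re
    linarith
  have hbound : ∀ k : ℕ, ‖(c k).re‖ ≤
      (n : ℝ) * ((‖M ^ k‖ * ‖v‖) * (‖W‖ * (‖M ^ k‖ * ‖v‖))) := by
    intro k
    have hu : ‖(M ^ k) *ᵥ v‖ ≤ ‖M ^ k‖ * ‖v‖ := Matrix.linfty_opNorm_mulVec _ _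
    have hWu : ‖W *ᵥ ((M ^ k) *ᵥ v)‖ ≤ ‖W‖ * (‖M ^ k‖ * ‖v‖) :=
      le_trans (Matrix.linfty_opNorm_mulVec _ _)
        (mul_le_mul_of_nonneg_left hu (norm_nonneg _))
    calc ‖(c k).re‖ ≤ ‖c k‖ := by
          rw [Real.norm_eq_abs]; exact Complex.abs_re_le_norm _
      _ ≤ (n : ℝ) * (‖star ((M ^ k) *ᵥ v)‖ * ‖W *ᵥ ((M ^ k) *ᵥ v)‖) :=
          norm_dotProduct_le _ _
      _ ≤ (n : ℝ) * ((‖M ^ k‖ * ‖v‖) * (‖W‖ * (‖M ^ k‖ * ‖v‖))) := by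
          rw [norm_star]
          exact mul_le_mul_of_nonneg_left
            (mul_le_mul hu hWu (norm_nonneg _) (by positivity)) (by positivity)
  have htend : Tendsto (fun k => (c k).re) atTop (𝓝 0) := by
    refine squeeze_zero_norm hbound ?_
    have hWc : Tendsto (fun _ : ℕ => ‖W‖) atTop (𝓝 ‖W‖) := tendsto_const_nhds
    have hg := ((hpow.mul_const ‖v‖).mul (hWc.mul (hpow.mul_const ‖v‖))).const_mul (n : ℝ)
    simpa using hg
  have hre : 0 ≤ (star v ⬝ᵥ W *ᵥ v).re :=
    le_of_tendsto htend (Filter.Eventually.of_forall hkey)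
  rw [Complex.le_def]
  simpa [him] using hre

/-- Theorem 3.1(ii): the fixed-point iterates are nonincreasing and bounded below by every
element of `R_≤ ∩ ℙ`. -/
theorem theorem_3_1_ii (n m : ℕ) (A : Matrix (Fin n) (Fin n) ℂ) (B : Matrix (Fin n) (Fin m) ℂ)
    (R : Matrix (Fin m) (Fin m) ℂ) (H : Matrix (Fin n) (Fin n) ℂ)
    (hR : R.IsHermitian) (hRunit : IsUnit R) (hH : H.IsHermitian)
    (hP : ∃ XP : Matrix (Fin n) (Fin n) ℂ, XP.IsHermitian ∧ (RX R B XP).PosDef ∧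
      (Rop A B R H XP - XP).PosSemidef)
    (hT : ∃ XT : Matrix (Fin n) (Fin n) ℂ, XT.IsHermitian ∧ IsUnit (RX R B XT) ∧
      spectralRadius ℂ (hatM (TX A B R XT)) < 1)
    (X : ℕ → Matrix (Fin n) (Fin n) ℂ)
    (hX0 : X 0 ∈ Sge A B R H)
    (hrec : ∀ k : ℕ, X (k + 1) = Rop A B R H (X k)) :
    ∀ k : ℕ, (X k - X (k + 1)).PosSemidef ∧
      ∀ XP : Matrix (Fin n) (Fin n) ℂ, XP.IsHermitian → (RX R B XP).PosDef →
        (Rop A B R H XP - XP).PosSemidef → (X (k + 1) - XP).PosSemidef := by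
  obtain ⟨hX0h, XT, hXTh, hXTu, hXTrho, hXTst⟩ := hX0
  obtain ⟨P0, hP0h, hP0pd, hP0le⟩ := hP
  -- every element of `R_≤ ∩ ℙ` is a lower bound for `X 0` (via the Stein inequality)
  have key0 : ∀ XP : Matrix (Fin n) (Fin n) ℂ, XP.IsHermitian → (RX R B XP).PosDef →
      (Rop A B R H XP - XP).PosSemidef → (X 0 - XP).PosSemidef := by
    intro XP hXPh hXPpd hXPle
    have hXPu : IsUnit (RX R B XP) := hXPpd.isUnit
    have hkey := key_identity A B R H hR XT hXPh hXPu
    have hW : (X 0 - XP).IsHermitian := hX0h.sub hXPh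
    apply posSemidef_of_CStein _ _ hXTrho hW
    have hsplit : CStein (TX A B R XT) (X 0 - XP) =
        (CStein (TX A B R XT) (X 0) - HX A B R H XT)
          + ((Rop A B R H XP - XP) + Kop A B R XT XP) := by
      simp only [CStein, mconj_sub, Matrix.mul_sub, Matrix.sub_mul]
      rw [hkey]
      abel
    rw [hsplit]
    exact hXTst.add (hXPle.add (posSemidef_Kop A B R hXPpd.posSemidef))
  -- the iterates stay Hermitian and above every element of `R_≤ ∩ ℙ`
  have Q : ∀ k : ℕ, (X k).IsHermitian ∧
      ∀ XP : Matrix (Fin n) (Fin n) ℂ, XP.IsHermitian → (RX R B XP).PosDef →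
        (Rop A B R H XP - XP).PosSemidef → (X k - XP).PosSemidef := by
    intro k
    induction k with
    | zero => exact ⟨hX0h, key0⟩
    | succ k ih =>
      have hpdk : (RX R B (X k)).PosDef :=
        posDef_RX_of_ge B R hP0pd (ih.2 P0 hP0h hP0pd hP0le)
      have hherm : (X (k + 1)).IsHermitian := by
        rw [hrec k]; exact isHermitian_Rop A B R H hR hH ih.1 hpdk.isUnit
      refine ⟨hherm, fun XP hXPh hXPpd hXPle => ?_⟩
      have h1 : (Rop A B R H (X k) - Rop A B R H XP).PosSemidef :=
        posSemidef_Rop_sub_Rop A B R H hR ih.1 hXPh hpdk.isUnit hXPpd.isUnit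
          hXPpd.posSemidef (ih.2 XP hXPh hXPpd hXPle)
      have hsplit : X (k + 1) - XP =
          (Rop A B R H (X k) - Rop A B R H XP) + (Rop A B R H XP - XP) := by
        rw [hrec k]; abel
      rw [hsplit]
      exact h1.add hXPle
  -- monotonicity of the iterates
  have M : ∀ k : ℕ, (X k - X (k + 1)).PosSemidef := by
    intro k
    induction k with
    | zero =>
      have hpd0 : (RX R B (X 0)).PosDef :=
        posDef_RX_of_ge B R hP0pd ((Q 0).2 P0 hP0h hP0pd hP0le)
      have hkey := key_identity A B R H hR XT hX0h hpd0.isUnit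
      have hsplit : X 0 - X 1 =
          (CStein (TX A B R XT) (X 0) - HX A B R H XT) + Kop A B R XT (X 0) := by
        rw [hrec 0, hkey]
        simp only [CStein]
        abel
      rw [hsplit]
      exact hXTst.add (posSemidef_Kop A B R hpd0.posSemidef)
    | succ k ih =>
      have hpdk : (RX R B (X k)).PosDef :=
        posDef_RX_of_ge B R hP0pd ((Q k).2 P0 hP0h hP0pd hP0le)
      have hpdk1 : (RX R B (X (k + 1))).PosDef :=
        posDef_RX_of_ge B R hP0pd ((Q (k + 1)).2 P0 hP0h hP0pd hP0le)
      have h1 : (Rop A B R H (X k) - Rop A B R H (X (k + 1))).PosSemidef :=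
        posSemidef_Rop_sub_Rop A B R H hR (Q k).1 (Q (k + 1)).1 hpdk.isUnit
          hpdk1.isUnit hpdk1.posSemidef ih
      rw [← hrec k, ← hrec (k + 1)] at h1
      exact h1
  exact fun k => ⟨M k, fun XP h1 h2 h3 => (Q (k + 1)).2 XP h1 h2 h3⟩


end CDARE
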